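/- Vandermonde-type determinant: for variables x₁,…,xₙ and sequences (aᵢ), (bᵢ), det( (∏_{k=1}^{n−j}(xᵢ − a_k)) / (∏_{k=1}^{n−j+1}(1 − b_k xᵢ)) )_{1≤i,j≤n} = (∏_{1≤i<j≤n} (1 − aᵢ bⱼ)(xᵢ − xⱼ)) / (∏_{i=1}^n ∏_{j=1}^n (1 − bⱼ xᵢ)). -/

import Mathlib

open Finset

open Finset Polynomial

namespace VdmAux

variable {M : Type*} [CommMonoid M] {n : ℕ}

lemma filter_lt_eq_Iio (j : Fin n) : univ.filter (fun i => i < j) = Finset.Iio j := by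
  ext i; simp

lemma filter_gt_eq_Ioi (i : Fin n) : univ.filter (fun j => i < j) = Finset.Ioi i := by
  ext j; simp

lemma prod_pairs_fst (f : Fin n → Fin n → M) :
    ∏ p ∈ univ.filter (fun p : Fin n × Fin n => p.1 < p.2), f p.1 p.2
      = ∏ i : Fin n, ∏ j ∈ univ.filter (fun j => i < j), f i j := by
  rw [prod_filter, ← Finset.univ_product_univ, Finset.prod_product]
  refine Finset.prod_congr rfl fun i _ => ?_
  dsimp only
  exact (prod_filter _ _).symm

lemma prod_pairs_snd (f : Fin n → Fin n → M) :
    ∏ p ∈ univ.filter (fun p : Fin n × Fin n => p.1 < p.2), f p.1 p.2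
      = ∏ j : Fin n, ∏ i ∈ univ.filter (fun i => i < j), f i j := by
  rw [prod_filter, ← Finset.univ_product_univ, Finset.prod_product_right]
  refine Finset.prod_congr rfl fun j _ => ?_
  dsimp only
  exact (prod_filter _ _).symm

lemma prod_Icc_one (m : ℕ) (hm : m ≤ n) (u : ℕ → M) :
    ∏ k ∈ Finset.Icc 1 m, u k
      = ∏ i ∈ univ.filter (fun i : Fin n => i.val < m), u (i.val + 1) := by
  refine Finset.prod_bij' (fun k hk => (⟨k - 1, by simp only [Finset.mem_Icc] at hk; omega⟩ : Fin n))
    (fun i _ => i.val + 1) ?_ ?_ ?_ ?_ ?_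
  · intro k hk; simp only [Finset.mem_Icc] at hk; simp only [Finset.mem_filter, Finset.mem_univ,
      true_and]; omega
  · intro i hi; simp only [Finset.mem_filter, Finset.mem_univ, true_and] at hi
    simp only [Finset.mem_Icc]; omega
  · intro k hk; simp only [Finset.mem_Icc] at hk; dsimp only; omega
  · intro i _; exact Fin.ext (by simp)
  · intro k hk; simp only [Finset.mem_Icc] at hk; dsimp only; congr 1; omega

lemma prod_Icc_top (c : ℕ) (u : ℕ → M) :
    ∏ k ∈ Finset.Icc (c + 1) n, u k
      = ∏ i ∈ univ.filter (fun i : Fin n => c ≤ i.val), u (i.val + 1) := by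
  refine Finset.prod_bij' (fun k hk => (⟨k - 1, by simp only [Finset.mem_Icc] at hk; omega⟩ : Fin n))
    (fun i _ => i.val + 1) ?_ ?_ ?_ ?_ ?_
  · intro k hk; simp only [Finset.mem_Icc] at hk; simp only [Finset.mem_filter, Finset.mem_univ,
      true_and]; omega
  · intro i hi; simp only [Finset.mem_filter, Finset.mem_univ, true_and] at hi
    simp only [Finset.mem_Icc]; omega
  · intro k hk; simp only [Finset.mem_Icc] at hk; dsimp only; omega
  · intro i _; exact Fin.ext (by simp)
  · intro k hk; simp only [Finset.mem_Icc] at hk; dsimp only; congr 1; omega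

end VdmAux
open Finset Polynomial

namespace VdmAux

lemma det_antitriangular {R : Type*} [CommRing R] :
    ∀ {n : ℕ} (A : Matrix (Fin n) (Fin n) R),
      (∀ i j : Fin n, (i : ℕ) + (j : ℕ) + 1 < n → A i j = 0) →
      A.det = (∏ i : Fin n, (-1 : R) ^ (i : ℕ)) * ∏ i : Fin n, A i i.rev := by
  intro n
  induction n with
  | zero => intro A _; simp [Matrix.det_isEmpty]
  | succ n ih =>
    intro A hA
    rw [Matrix.det_succ_row_zero]
    rw [Finset.sum_eq_single (Fin.last n)]
    · have hsub : (A.submatrix Fin.succ (Fin.last n).succAbove).det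
          = (∏ i : Fin n, (-1 : R) ^ (i : ℕ)) *
            ∏ i : Fin n, A i.succ (Fin.castSucc i.rev) := by
        rw [Fin.succAbove_last]
        exact ih _ (fun i j h => hA _ _ (by simp only [Fin.val_succ, Fin.coe_castSucc]; omega))
      rw [hsub]
      have h1 : ∏ i : Fin (n+1), (-1 : R) ^ (i : ℕ)
          = (∏ i : Fin n, (-1 : R) ^ (i : ℕ)) * (-1) ^ n := by
        rw [Fin.prod_univ_castSucc]; simp
      have h2 : ∏ i : Fin (n+1), A i i.rev
          = A 0 (Fin.last n) * ∏ i : Fin n, A i.succ (Fin.castSucc i.rev) := by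
        rw [Fin.prod_univ_succ, Fin.rev_zero]
        congr 1
        exact Finset.prod_congr rfl fun i _ => by rw [Fin.rev_succ]
      rw [h1, h2, Fin.val_last]
      ring
    · intro j _ hj
      have : A 0 j = 0 := by
        apply hA
        simp only [Fin.val_zero]
        have := Fin.val_lt_last hj
        omega
      rw [this]; ring
    · intro h; exact absurd (Finset.mem_univ _) h

lemma eval_mat {R : Type*} [CommRing R] {n : ℕ} (v : Fin n → R) (q : Fin n → R[X])
    (h_deg : ∀ j, (q j).natDegree < n) :
    Matrix.of (fun i j => ((q j).eval (v i))) =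
    (Matrix.vandermonde v) * (Matrix.of (fun (i j : Fin n) => (q j).coeff i)) := by
  ext i j
  rw [Matrix.mul_apply, Matrix.of_apply, ← Polynomial.eval₂_id, Polynomial.eval₂_eq_sum]
  simp only [eq_intCast, Int.cast_id, Matrix.vandermonde]
  have : (q j).support ⊆ range n := supp_subset_range (h_deg j)
  rw [Polynomial.sum_eq_of_subset _ (fun j => zero_mul ((v i) ^ j)) this, ← Fin.sum_univ_eq_sum_range]
  congr
  ext k
  rw [mul_comm, Matrix.of_apply, RingHom.id_apply]
  rfl

end VdmAux
open Finset Polynomial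

namespace VdmAux


abbrev Rr (n : ℕ) := MvPolynomial (Sum (Fin n) (Sum ℕ ℕ)) ℤ

noncomputable def XX (n : ℕ) (i : Fin n) : Rr n := MvPolynomial.X (Sum.inl i)
noncomputable def AA (n : ℕ) (k : ℕ) : Rr n := MvPolynomial.X (Sum.inr (Sum.inl k))
noncomputable def BB (n : ℕ) (k : ℕ) : Rr n := MvPolynomial.X (Sum.inr (Sum.inr k))

noncomputable def hpoly (n : ℕ) (p : Fin n) : Polynomial (Rr n) :=
  (∏ k ∈ Finset.Icc 1 (n - (p.val + 1)), (X - C (AA n k))) *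
  (∏ k ∈ Finset.Icc (n - p.val + 1) n, (1 - C (BB n k) * X))

lemma hpoly_natDegree_lt (n : ℕ) (p : Fin n) : (hpoly n p).natDegree < n := by
  have h1 : (∏ k ∈ Finset.Icc 1 (n - (p.val + 1)), (X - C (AA n k))).natDegree
      ≤ (Finset.Icc 1 (n - (p.val + 1))).card := by
    refine le_trans (Polynomial.natDegree_prod_le _ _) ?_
    refine le_trans (Finset.sum_le_card_nsmul _ _ 1 (fun k _ => by
      simp [Polynomial.natDegree_X_sub_C])) ?_
    simp
  have h2 : (∏ k ∈ Finset.Icc (n - p.val + 1) n, (1 - C (BB n k) * X :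
      Polynomial (Rr n))).natDegree ≤ (Finset.Icc (n - p.val + 1) n).card := by
    refine le_trans (Polynomial.natDegree_prod_le _ _) ?_
    refine le_trans (Finset.sum_le_card_nsmul _ _ 1 (fun k _ => ?_)) (by simp)
    refine le_trans (Polynomial.natDegree_sub_le _ _) ?_
    simp only [Polynomial.natDegree_one, max_le_iff]
    exact ⟨Nat.zero_le _, le_trans (Polynomial.natDegree_C_mul_le _ _) Polynomial.natDegree_X_le⟩
  have := le_trans (Polynomial.natDegree_mul_le (p := ∏ k ∈ Finset.Icc 1 (n - (p.val + 1)),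
      (X - C (AA n k))) (q := ∏ k ∈ Finset.Icc (n - p.val + 1) n, (1 - C (BB n k) * X)))
      (add_le_add h1 h2)
  rw [hpoly]
  refine lt_of_le_of_lt this ?_
  rw [Nat.card_Icc, Nat.card_Icc]
  have := p.isLt
  omega

end VdmAux
namespace VdmAux

lemma Icc_one_eq_Ioc (m : ℕ) : Finset.Icc 1 m = Finset.Ioc 0 m := by
  ext k; simp [Nat.lt_iff_add_one_le]

lemma Icc_succ_eq_Ioc (c m : ℕ) : Finset.Icc (c + 1) m = Finset.Ioc c m := by
  ext k; simp only [Finset.mem_Icc, Finset.mem_Ioc]; omega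

lemma key (n : ℕ) :
    (Matrix.of fun i p : Fin n =>
        (∏ k ∈ Finset.Icc 1 (n - (p.val + 1)), (XX n i - AA n k)) *
        (∏ k ∈ Finset.Icc (n - p.val + 1) n, (1 - BB n k * XX n i))).det
      = (∏ q ∈ Finset.univ.filter (fun q : Fin n × Fin n => q.1 < q.2), (XX n q.1 - XX n q.2)) *
        (∏ q ∈ Finset.univ.filter (fun q : Fin n × Fin n => q.1 < q.2),
            (1 - AA n (q.1.val + 1) * BB n (q.2.val + 1))) := by
  classical
  set D : Rr n := (Matrix.of fun i p : Fin n => (hpoly n p).coeff i).det with hDdef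
  set Vd : Rr n := ∏ i : Fin n, ∏ j ∈ Finset.Ioi i, (XX n j - XX n i) with hVddef
  set sgn : Rr n := ∏ i : Fin n, (-1 : Rr n) ^ (i : ℕ) with hsgndef
  set WB : Rr n := ∏ q ∈ Finset.univ.filter (fun q : Fin n × Fin n => q.1 < q.2),
      (1 - AA n (q.1.val + 1) * BB n (q.2.val + 1)) with hWBdef
  set VA : Rr n := ∏ q ∈ Finset.univ.filter (fun q : Fin n × Fin n => q.1 < q.2),
      (AA n (q.2.val + 1) - AA n (q.1.val + 1)) with hVAdef
  -- the evaluation matrix identity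
  have hmat : (Matrix.of fun i p : Fin n =>
        (∏ k ∈ Finset.Icc 1 (n - (p.val + 1)), (XX n i - AA n k)) *
        (∏ k ∈ Finset.Icc (n - p.val + 1) n, (1 - BB n k * XX n i)))
      = Matrix.of (fun i p : Fin n => (hpoly n p).eval (XX n i)) := by
    ext i p
    simp [hpoly, Polynomial.eval_prod]
  have hNdet : (Matrix.of fun i p : Fin n =>
        (∏ k ∈ Finset.Icc 1 (n - (p.val + 1)), (XX n i - AA n k)) *
        (∏ k ∈ Finset.Icc (n - p.val + 1) n, (1 - BB n k * XX n i))).det = Vd * D := by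
    rw [hmat, eval_mat _ _ (hpoly_natDegree_lt n), Matrix.det_mul, Matrix.det_vandermonde]

  -- the substitution x ↦ a
  set φ : Rr n →ₐ[ℤ] Rr n := MvPolynomial.aeval
    (Sum.elim (fun i : Fin n => AA n (i.val + 1)) (fun v => MvPolynomial.X (Sum.inr v))) with hφdef
  have hφX : ∀ i : Fin n, φ (XX n i) = AA n (i.val + 1) := fun i => by
    simp [hφdef, XX, MvPolynomial.aeval_X]
  have hφA : ∀ k, φ (AA n k) = AA n k := fun k => by
    simp [hφdef, AA, MvPolynomial.aeval_X]
  have hφB : ∀ k, φ (BB n k) = BB n k := fun k => by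
    simp [hφdef, BB, MvPolynomial.aeval_X]
  have hφD : φ D = D := by
    rw [hDdef, AlgHom.map_det]
    congr 1
    ext i p
    simp only [Matrix.map_apply, Matrix.of_apply]
    have hmapped : (hpoly n p).map (φ : Rr n →+* Rr n) = hpoly n p := by
      simp [hpoly, Polynomial.map_prod, Polynomial.map_sub, Polynomial.map_mul,
        Polynomial.map_one, Polynomial.map_C, Polynomial.map_X, hφA, hφB]
    conv_rhs => rw [← hmapped]
    rw [Polynomial.coeff_map]
    rfl
  -- φ of the determinant identity
  have hEdet : φ ((Matrix.of fun i p : Fin n =>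
        (∏ k ∈ Finset.Icc 1 (n - (p.val + 1)), (XX n i - AA n k)) *
        (∏ k ∈ Finset.Icc (n - p.val + 1) n, (1 - BB n k * XX n i))).det)
      = (Matrix.of fun i p : Fin n =>
        (∏ k ∈ Finset.Icc 1 (n - (p.val + 1)), (AA n (i.val + 1) - AA n k)) *
        (∏ k ∈ Finset.Icc (n - p.val + 1) n, (1 - BB n k * AA n (i.val + 1)))).det := by
    rw [AlgHom.map_det]
    congr 1
    ext i p
    simp [Matrix.map_apply, map_prod, hφX, hφA, hφB]
  set E : Matrix (Fin n) (Fin n) (Rr n) := Matrix.of fun i p : Fin n =>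
      (∏ k ∈ Finset.Icc 1 (n - (p.val + 1)), (AA n (i.val + 1) - AA n k)) *
      (∏ k ∈ Finset.Icc (n - p.val + 1) n, (1 - BB n k * AA n (i.val + 1))) with hEdef
  have hE0 : ∀ i p : Fin n, (i : ℕ) + (p : ℕ) + 1 < n → E i p = 0 := by
    intro i p h
    have hmem : i.val + 1 ∈ Finset.Icc 1 (n - (p.val + 1)) := by
      simp only [Finset.mem_Icc]; omega
    simp only [hEdef, Matrix.of_apply]
    rw [Finset.prod_eq_zero hmem (sub_self (AA n (i.val + 1))), zero_mul]
  have hdiag : ∀ i : Fin n, E i i.rev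
      = (∏ k ∈ Finset.Icc 1 i.val, (AA n (i.val + 1) - AA n k)) *
        (∏ k ∈ Finset.Icc (i.val + 1 + 1) n, (1 - BB n k * AA n (i.val + 1))) := by
    intro i
    have hv : (i.rev : ℕ) = n - (i.val + 1) := by simp [Fin.val_rev]
    have h1 : n - ((i.rev : ℕ) + 1) = i.val := by have := i.isLt; omega
    have h2 : n - (i.rev : ℕ) + 1 = i.val + 1 + 1 := by have := i.isLt; omega
    simp only [hEdef, Matrix.of_apply, h1, h2]
  have hprod_diag : (∏ i : Fin n, E i i.rev) = VA * WB := by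
    rw [Finset.prod_congr rfl (fun i _ => hdiag i), Finset.prod_mul_distrib]
    congr 1
    · rw [hVAdef, prod_pairs_snd (fun a b : Fin n => AA n (b.val + 1) - AA n (a.val + 1))]
      refine Finset.prod_congr rfl fun i _ => ?_
      rw [prod_Icc_one i.val i.isLt.le (fun k => AA n (i.val + 1) - AA n k)]
      refine Finset.prod_congr ?_ (fun j _ => rfl)
      ext j
      simp only [Finset.mem_filter, Finset.mem_univ, true_and, Fin.lt_def]
    · rw [hWBdef, prod_pairs_fst (fun a b : Fin n => 1 - AA n (a.val + 1) * BB n (b.val + 1))]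
      refine Finset.prod_congr rfl fun i _ => ?_
      rw [prod_Icc_top (i.val + 1) (fun k => 1 - BB n k * AA n (i.val + 1))]
      refine Finset.prod_congr ?_ (fun j _ => by ring)
      ext j
      simp only [Finset.mem_filter, Finset.mem_univ, true_and, Fin.lt_def]
      omega
  have hdetE : E.det = sgn * (VA * WB) := by
    rw [det_antitriangular E hE0, hprod_diag, hsgndef]
  have hφVd : φ Vd = VA := by
    rw [hVddef, hVAdef, prod_pairs_fst (fun a b : Fin n => AA n (b.val + 1) - AA n (a.val + 1))]
    rw [map_prod]
    refine Finset.prod_congr rfl fun i _ => ?_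
    rw [map_prod, filter_gt_eq_Ioi]
    exact Finset.prod_congr rfl fun j _ => by rw [map_sub, hφX, hφX]
  have hVAne : VA ≠ 0 := by
    rw [hVAdef]
    refine Finset.prod_ne_zero_iff.mpr fun q hq => sub_ne_zero_of_ne ?_
    simp only [Finset.mem_filter, Finset.mem_univ, true_and] at hq
    intro hEq
    simp only [AA] at hEq
    have h2 := MvPolynomial.X_injective hEq
    simp only [Sum.inr.injEq, Sum.inl.injEq] at h2
    have : q.1 < q.2 := hq
    rw [Fin.lt_def] at this
    omega
  have hφall := congrArg φ hNdet
  rw [hEdet, map_mul, hφVd, hφD, hdetE] at hφall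
  have hDval : D = sgn * WB := by
    apply mul_left_cancel₀ hVAne
    rw [← hφall]; ring
  have hPX : (∏ q ∈ Finset.univ.filter (fun q : Fin n × Fin n => q.1 < q.2),
      (XX n q.1 - XX n q.2)) = sgn * Vd := by
    rw [prod_pairs_snd (fun a b : Fin n => XX n a - XX n b)]
    have hstep : ∀ j : Fin n, ∏ i ∈ Finset.univ.filter (fun i => i < j), (XX n i - XX n j)
        = (-1 : Rr n) ^ (j : ℕ) * ∏ i ∈ Finset.univ.filter (fun i => i < j),
            (XX n j - XX n i) := by
      intro j
      have hneg : ∀ i : Fin n, (XX n i - XX n j) = (-1) * (XX n j - XX n i) := fun i => by ring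
      rw [Finset.prod_congr rfl (fun i _ => hneg i), Finset.prod_mul_distrib,
        Finset.prod_const, filter_lt_eq_Iio, Fin.card_Iio]
    rw [Finset.prod_congr rfl (fun j _ => hstep j), Finset.prod_mul_distrib, ← hsgndef]
    congr 1
    rw [← prod_pairs_snd (fun a b : Fin n => XX n b - XX n a),
      prod_pairs_fst (fun a b : Fin n => XX n b - XX n a), hVddef]
    exact Finset.prod_congr rfl fun i _ => by rw [filter_gt_eq_Ioi]
  rw [hNdet, hDval, hPX]
  ring

end VdmAux

namespace VdmAux

lemma key_mapped {F : Type*} [Field F] (n : ℕ) (x : Fin n → F) (a b : ℕ → F) :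
    (Matrix.of fun i p : Fin n =>
        (∏ k ∈ Finset.Icc 1 (n - (p.val + 1)), (x i - a k)) *
        (∏ k ∈ Finset.Icc (n - p.val + 1) n, (1 - b k * x i))).det
      = (∏ q ∈ Finset.univ.filter (fun q : Fin n × Fin n => q.1 < q.2), (x q.1 - x q.2)) *
        (∏ q ∈ Finset.univ.filter (fun q : Fin n × Fin n => q.1 < q.2),
            (1 - a (q.1.val + 1) * b (q.2.val + 1))) := by
  classical
  set ψ : Rr n →+* F :=
    MvPolynomial.eval₂Hom (Int.castRingHom F) (Sum.elim x (Sum.elim a b)) with hψ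
  have hψX : ∀ i, ψ (XX n i) = x i := fun i => by simp [hψ, XX]
  have hψA : ∀ k, ψ (AA n k) = a k := fun k => by simp [hψ, AA]
  have hψB : ∀ k, ψ (BB n k) = b k := fun k => by simp [hψ, BB]
  have h := congrArg ψ (key n)
  rw [RingHom.map_det, map_mul, map_prod, map_prod] at h
  simp only [RingHom.mapMatrix_apply] at h
  have hL : ((Matrix.of (fun i p : Fin n =>
      (∏ k ∈ Finset.Icc 1 (n - (p.val + 1)), (XX n i - AA n k)) *
      (∏ k ∈ Finset.Icc (n - p.val + 1) n, (1 - BB n k * XX n i)))).map ψ)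
      = Matrix.of fun i p : Fin n =>
        (∏ k ∈ Finset.Icc 1 (n - (p.val + 1)), (x i - a k)) *
        (∏ k ∈ Finset.Icc (n - p.val + 1) n, (1 - b k * x i)) := by
    ext i p
    simp [Matrix.map_apply, map_prod, map_sub, map_mul, map_one, hψX, hψA, hψB]
  rw [hL] at h
  rw [h]
  congr 1
  · exact Finset.prod_congr rfl fun q _ => by rw [map_sub, hψX, hψX]
  · exact Finset.prod_congr rfl fun q _ => by rw [map_sub, map_one, map_mul, hψA, hψB]

end VdmAux

/-- Vandermonde-type determinant:
`det( ∏_{k=1}^{n−j}(xᵢ−a_k) / ∏_{k=1}^{n−j+1}(1−b_k xᵢ) )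
 = ∏_{i<j}(1−aᵢbⱼ)(xᵢ−xⱼ) / ∏_{i,j}(1−bⱼxᵢ)`,
in any field where the denominators `1 − b_k xᵢ` are nonzero. Here the entry in row `i`
and column `j` (with `i, j` running over `1,…,n`, represented by `i.val+1`, `j.val+1`)
is `(xᵢ−a₁)⋯(xᵢ−a_{n−j}) / ((1−b₁xᵢ)⋯(1−b_{n−j+1}xᵢ))`. -/
theorem vandermonde_type_det {F : Type*} [Field F] (n : ℕ) (x : Fin n → F) (a b : ℕ → F)
    (hb : ∀ (i : Fin n), ∀ k ∈ Finset.Icc 1 n, 1 - b k * x i ≠ 0) :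
    Matrix.det (Matrix.of fun i j : Fin n =>
        (∏ k ∈ Finset.Icc 1 (n - (j.val + 1)), (x i - a k)) /
        (∏ k ∈ Finset.Icc 1 (n - j.val), (1 - b k * x i))) =
      (∏ p ∈ Finset.univ.filter (fun p : Fin n × Fin n => p.1 < p.2),
          ((1 - a (p.1.val + 1) * b (p.2.val + 1)) * (x p.1 - x p.2))) /
      (∏ i : Fin n, ∏ j : Fin n, (1 - b (j.val + 1) * x i)) := by
  classical
  have hQ : ∀ i : Fin n, (∏ k ∈ Finset.Icc 1 n, (1 - b k * x i)) ≠ 0 :=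
    fun i => Finset.prod_ne_zero_iff.mpr (fun k hk => hb i k hk)
  have hM : (Matrix.of fun i j : Fin n =>
        (∏ k ∈ Finset.Icc 1 (n - (j.val + 1)), (x i - a k)) /
        (∏ k ∈ Finset.Icc 1 (n - j.val), (1 - b k * x i)))
      = Matrix.of fun i j : Fin n => (∏ k ∈ Finset.Icc 1 n, (1 - b k * x i))⁻¹ *
          ((∏ k ∈ Finset.Icc 1 (n - (j.val + 1)), (x i - a k)) *
           (∏ k ∈ Finset.Icc (n - j.val + 1) n, (1 - b k * x i))) := by
    ext i j
    have hsplit : (∏ k ∈ Finset.Icc 1 n, (1 - b k * x i))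
        = (∏ k ∈ Finset.Icc 1 (n - j.val), (1 - b k * x i)) *
          (∏ k ∈ Finset.Icc (n - j.val + 1) n, (1 - b k * x i)) := by
      rw [VdmAux.Icc_one_eq_Ioc, VdmAux.Icc_one_eq_Ioc, VdmAux.Icc_succ_eq_Ioc]
      exact (Finset.prod_Ioc_consecutive _ (Nat.zero_le _) (Nat.sub_le n j.val)).symm
    have hden : (∏ k ∈ Finset.Icc 1 (n - j.val), (1 - b k * x i)) ≠ 0 :=
      Finset.prod_ne_zero_iff.mpr (fun k hk => hb i k (by
        simp only [Finset.mem_Icc] at hk ⊢; omega))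
    have htail : (∏ k ∈ Finset.Icc (n - j.val + 1) n, (1 - b k * x i)) ≠ 0 :=
      Finset.prod_ne_zero_iff.mpr (fun k hk => hb i k (by
        simp only [Finset.mem_Icc] at hk ⊢; omega))
    simp only [Matrix.of_apply]
    rw [hsplit, mul_inv]
    linear_combination (-((∏ k ∈ Finset.Icc 1 (n - (j.val + 1)), (x i - a k)) *
      (∏ k ∈ Finset.Icc 1 (n - j.val), (1 - b k * x i))⁻¹)) * inv_mul_cancel₀ htail
  rw [hM]
  have hdet := Matrix.det_mul_column
      (fun i : Fin n => (∏ k ∈ Finset.Icc 1 n, (1 - b k * x i))⁻¹)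
      (Matrix.of fun i j : Fin n =>
        (∏ k ∈ Finset.Icc 1 (n - (j.val + 1)), (x i - a k)) *
        (∏ k ∈ Finset.Icc (n - j.val + 1) n, (1 - b k * x i)))
  simp only [Matrix.of_apply] at hdet
  rw [hdet, VdmAux.key_mapped n x a b]
  have hrhsden : (∏ i : Fin n, ∏ j : Fin n, (1 - b (j.val + 1) * x i))
      = ∏ i : Fin n, ∏ k ∈ Finset.Icc 1 n, (1 - b k * x i) := by
    refine Finset.prod_congr rfl fun i _ => ?_
    rw [VdmAux.prod_Icc_one n le_rfl (fun k => 1 - b k * x i),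
      Finset.filter_true_of_mem (fun j _ => j.isLt)]
  rw [hrhsden, Finset.prod_inv_distrib, Finset.prod_mul_distrib, div_eq_mul_inv]
  ring
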